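/- If the hypergraph product matrix H_X = [A⊗I | I⊗Bᵀ] admits a layer decomposition into k layers, then Bᵀ admits a layer decomposition into at most k layers; hence the minimal number of layers of H_X equals max(k_A, k_{Bᵀ}), where k_A and k_{Bᵀ} are the minimal numbers of layers of A and Bᵀ respectively. -/
import Mathlib


/-- A layer decomposition of a matrix `H` (rows `R`, columns `C`, over F₂)
into `k` layers. -/
def IsLayerDecomp {R C : Type*} (H : R → C → ZMod 2) (k : ℕ)
    (L : Fin k → Set R) : Prop :=
  (∀ r, ∃! i, r ∈ L i) ∧
  ∀ i, ∀ r ∈ L i, ∀ r' ∈ L i, r ≠ r' → ∀ c, H r c = 0 ∨ H r' c = 0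

/-- Minimal number of layers of a layer decomposition of `H`. -/
noncomputable def minLayers {R C : Type*} (H : R → C → ZMod 2) : ℕ :=
  sInf {k | ∃ L : Fin k → Set R, IsLayerDecomp H k L}

lemma trivial_decomp {R C : Type*} [Fintype R] (H : R → C → ZMod 2) :
    ∃ L : Fin (Fintype.card R) → Set R, IsLayerDecomp H (Fintype.card R) L := by
  classical
  refine ⟨fun i => {(Fintype.equivFin R).symm i}, fun r => ⟨Fintype.equivFin R r, by simp, ?_⟩, ?_⟩
  · intro j hj
    simp only [Set.mem_singleton_iff] at hj
    rw [hj]; simp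
  · intro i r hr r' hr' hne
    simp only [Set.mem_singleton_iff] at hr hr'
    exact absurd (hr.trans hr'.symm) hne

lemma projB_decomp {mA nA mB nB k : ℕ}
    (A : Fin mA → Fin nA → ZMod 2) (Bt : Fin mB → Fin nB → ZMod 2)
    (HX : Fin mA × Fin mB → (Fin nA × Fin mB ⊕ Fin mA × Fin nB) → ZMod 2)
    (hHX : ∀ a b col, HX (a, b) col =
      Sum.elim (fun p : Fin nA × Fin mB => if p.2 = b then A a p.1 else 0)
               (fun p : Fin mA × Fin nB => if p.1 = a then Bt b p.2 else 0) col)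
    (a0 : Fin mA)
    (L : Fin k → Set (Fin mA × Fin mB)) (hL : IsLayerDecomp HX k L) :
    IsLayerDecomp Bt k (fun i => {b | (a0, b) ∈ L i}) := by
  constructor
  · intro b; exact hL.1 (a0, b)
  · intro i b hb b' hb' hne j
    have h := hL.2 i (a0, b) hb (a0, b') hb'
      (by simp [Prod.ext_iff, hne]) (Sum.inr (a0, j))
    rw [hHX, hHX] at h
    simpa using h

lemma projA_decomp {mA nA mB nB k : ℕ}
    (A : Fin mA → Fin nA → ZMod 2) (Bt : Fin mB → Fin nB → ZMod 2)
    (HX : Fin mA × Fin mB → (Fin nA × Fin mB ⊕ Fin mA × Fin nB) → ZMod 2)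
    (hHX : ∀ a b col, HX (a, b) col =
      Sum.elim (fun p : Fin nA × Fin mB => if p.2 = b then A a p.1 else 0)
               (fun p : Fin mA × Fin nB => if p.1 = a then Bt b p.2 else 0) col)
    (b0 : Fin mB)
    (L : Fin k → Set (Fin mA × Fin mB)) (hL : IsLayerDecomp HX k L) :
    IsLayerDecomp A k (fun i => {a | (a, b0) ∈ L i}) := by
  constructor
  · intro a; exact hL.1 (a, b0)
  · intro i a ha a' ha' hne j
    have h := hL.2 i (a, b0) ha (a', b0) ha'
      (by simp [Prod.ext_iff, hne]) (Sum.inl (j, b0))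
    rw [hHX, hHX] at h
    simpa using h

lemma combine_decomp {mA nA mB nB kA kB : ℕ}
    (A : Fin mA → Fin nA → ZMod 2) (Bt : Fin mB → Fin nB → ZMod 2)
    (HX : Fin mA × Fin mB → (Fin nA × Fin mB ⊕ Fin mA × Fin nB) → ZMod 2)
    (hHX : ∀ a b col, HX (a, b) col =
      Sum.elim (fun p : Fin nA × Fin mB => if p.2 = b then A a p.1 else 0)
               (fun p : Fin mA × Fin nB => if p.1 = a then Bt b p.2 else 0) col)
    (LA : Fin kA → Set (Fin mA)) (hLA : IsLayerDecomp A kA LA)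
    (LB : Fin kB → Set (Fin mB)) (hLB : IsLayerDecomp Bt kB LB)
    (hm : 0 < max kA kB) :
    ∃ L : Fin (max kA kB) → Set (Fin mA × Fin mB),
      IsLayerDecomp HX (max kA kB) L := by
  haveI : NeZero (max kA kB) := ⟨hm.ne'⟩
  choose φA hφA huA using fun a => hLA.1 a
  choose φB hφB huB using fun b => hLB.1 b
  refine ⟨fun i => {p | Fin.castLE (le_max_left kA kB) (φA p.1)
      + Fin.castLE (le_max_right kA kB) (φB p.2) = i}, ?_, ?_⟩
  · intro r
    exact ⟨_, rfl, fun j hj => hj.symm⟩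
  · rintro i ⟨a, b⟩ hr ⟨a', b'⟩ hr' hne c
    simp only [Set.mem_setOf_eq] at hr hr'
    obtain ⟨j, c2⟩ | ⟨c1, j⟩ := c
    · rw [hHX, hHX]
      simp only [Sum.elim_inl]
      by_cases hb : b = b'
      · subst hb
        have heq : φA a = φA a' := by
          have h1 := hr.trans hr'.symm
          exact Fin.castLE_injective _ (add_right_cancel h1)
        have hane : a ≠ a' := fun h => hne (by rw [h])
        rcases hLA.2 (φA a) a (hφA a) a' (heq ▸ hφA a') hane j with h | h
        · left; split <;> simp [h]
        · right; split <;> simp [h]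
      · by_cases hc : c2 = b
        · right; rw [if_neg (fun h => hb (hc.symm.trans h))]
        · left; rw [if_neg hc]
    · rw [hHX, hHX]
      simp only [Sum.elim_inr]
      by_cases ha : a = a'
      · subst ha
        have heq : φB b = φB b' := by
          have h1 := hr.trans hr'.symm
          exact Fin.castLE_injective _ (add_left_cancel h1)
        have hbne : b ≠ b' := fun h => hne (by rw [h])
        rcases hLB.2 (φB b) b (hφB b) b' (heq ▸ hφB b') hbne j with h | h
        · left; split <;> simp [h]
        · right; split <;> simp [h]
      · by_cases hc : c1 = a
        · right; rw [if_neg (fun h => ha (hc.symm.trans h))]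
        · left; rw [if_neg hc]

/-- If H_X = [A⊗I | I⊗Bᵀ] admits a layer decomposition into k layers, then Bᵀ
admits a layer decomposition into at most k layers; hence the minimal number of
layers of H_X equals max(k_A, k_{Bᵀ}). -/
theorem hgp_min_layers (mA nA mB nB k : ℕ) (hmA : 0 < mA) (hmB : 0 < mB)
    (A : Fin mA → Fin nA → ZMod 2) (Bt : Fin mB → Fin nB → ZMod 2)
    (HX : Fin mA × Fin mB → (Fin nA × Fin mB ⊕ Fin mA × Fin nB) → ZMod 2)
    (hHX : ∀ a b col, HX (a, b) col =
      Sum.elim (fun p : Fin nA × Fin mB => if p.2 = b then A a p.1 else 0)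
               (fun p : Fin mA × Fin nB => if p.1 = a then Bt b p.2 else 0) col)
    (L : Fin k → Set (Fin mA × Fin mB))
    (hL : IsLayerDecomp HX k L) :
    (∃ LB : Fin k → Set (Fin mB), IsLayerDecomp Bt k LB) ∧
    minLayers HX = max (minLayers A) (minLayers Bt) := by
  classical
  have a0 : Fin mA := ⟨0, hmA⟩
  have b0 : Fin mB := ⟨0, hmB⟩
  refine ⟨⟨_, projB_decomp A Bt HX hHX a0 L hL⟩, ?_⟩
  -- the HX set is nonempty
  have hXne : {k' | ∃ L' : Fin k' → Set (Fin mA × Fin mB), IsLayerDecomp HX k' L'}.Nonempty :=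
    ⟨k, L, hL⟩
  have hX0 : ∃ L0 : Fin (minLayers HX) → Set (Fin mA × Fin mB),
      IsLayerDecomp HX (minLayers HX) L0 := Nat.sInf_mem hXne
  obtain ⟨L0, hL0⟩ := hX0
  have hAle : minLayers A ≤ minLayers HX :=
    Nat.sInf_le ⟨_, projA_decomp A Bt HX hHX b0 L0 hL0⟩
  have hBle : minLayers Bt ≤ minLayers HX :=
    Nat.sInf_le ⟨_, projB_decomp A Bt HX hHX a0 L0 hL0⟩
  -- A and Bt sets nonempty
  have hAne : {k' | ∃ L' : Fin k' → Set (Fin mA), IsLayerDecomp A k' L'}.Nonempty := by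
    obtain ⟨LA, hLA⟩ := trivial_decomp (R := Fin mA) A
    exact ⟨_, LA, hLA⟩
  have hBne : {k' | ∃ L' : Fin k' → Set (Fin mB), IsLayerDecomp Bt k' L'}.Nonempty := by
    obtain ⟨LB, hLB⟩ := trivial_decomp (R := Fin mB) Bt
    exact ⟨_, LB, hLB⟩
  obtain ⟨LA, hLA⟩ : ∃ L' : Fin (minLayers A) → Set (Fin mA),
      IsLayerDecomp A (minLayers A) L' := Nat.sInf_mem hAne
  obtain ⟨LB, hLB⟩ : ∃ L' : Fin (minLayers Bt) → Set (Fin mB),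
      IsLayerDecomp Bt (minLayers Bt) L' := Nat.sInf_mem hBne
  have hApos : 0 < minLayers A := by
    obtain ⟨i, -, -⟩ := hLA.1 a0
    exact i.pos
  obtain ⟨LX, hLX⟩ := combine_decomp A Bt HX hHX LA hLA LB hLB
    (lt_of_lt_of_le hApos (le_max_left _ _))
  have hle : minLayers HX ≤ max (minLayers A) (minLayers Bt) :=
    Nat.sInf_le ⟨LX, hLX⟩
  omega
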